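/- Let A = J(B,σ,u,μ) be an Albert algebra given by the second Tits construction over k with K = Z(B). Let g ∈ B^* satisfy g·σ(g) = λ ∈ k^*, set ν = N_B(g), and let q ∈ U(B,σ_u) with N_B(q) = ν̄^{-1}ν, where σ_u = Int(u)∘σ. Then the map φ̃ : A → A defined by (a,b) ↦ (g a g^{-1}, λ^{-1} σ(g)^# b q) satisfies N(φ̃(a,b)) = N((a,b)) for all (a,b) ∈ A; together with φ̃(1)=1 this makes φ̃ an automorphism of A extending x ↦ g x g^{-1} on (B,σ)_+. -/

import Mathlib

/-- In the second Tits construction `A = J(B,σ,u,μ)` (underlying space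
`(B,σ)₊ ⊕ B`, with norm `N (b,x) = N_B b + T_K (μ N_B x) − T_B (b x u σ(x))`), let
`g ∈ B*` with `g σ(g) = λ ∈ k*`, `ν = N_B g`, and let `q ∈ U(B,σ_u)` with
`N_B q = ν̄⁻¹ ν`, where `σ_u = Int(u) ∘ σ`.  Then `(a,b) ↦ (g a g⁻¹, λ⁻¹ σ(g)^# b q)`
preserves the norm of `A` and fixes the identity `(1,0)`, hence is an automorphism
of `A` extending `x ↦ g x g⁻¹` on `(B,σ)₊`. -/
theorem stmt4
    {k K B : Type*} [Field k] [Field K] [Algebra k K] [Ring B]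
    [Algebra K B] [Algebra k B] [IsScalarTower k K B]
    (hK2 : Module.finrank k K = 2)
    (bar : K ≃ₐ[k] K) (hbar : ∀ α, bar (bar α) = α) (hbar_ne : ∃ α, bar α ≠ α)
    (σ : B → B)
    (hσ_add : ∀ x y, σ (x + y) = σ x + σ y)
    (hσ_mul : ∀ x y, σ (x * y) = σ y * σ x)
    (hσ_inv : ∀ x, σ (σ x) = x)
    (hσ_smul : ∀ (α : K) (x : B), σ (α • x) = bar α • σ x)
    (NB : B → K) (hNB1 : NB 1 = 1) (hNBmul : ∀ x y, NB (x * y) = NB x * NB y)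
    (hNBsmul : ∀ (α : K) (x : B), NB (α • x) = α ^ 3 * NB x)
    (hNBσ : ∀ x, NB (σ x) = bar (NB x))
    (sharpB : B → B)
    (hsharp₁ : ∀ x, x * sharpB x = NB x • (1 : B))
    (hsharp₂ : ∀ x, sharpB x * x = NB x • (1 : B))
    (TB : B →ₗ[K] K) (hTB_comm : ∀ x y, TB (x * y) = TB (y * x))
    (hTBσ : ∀ x, TB (σ x) = bar (TB x))
    (u : Bˣ) (hu : σ (u : B) = (u : B)) (μ : K) (hμ : μ ≠ 0)
    (hNu : NB (u : B) = μ * bar μ)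
    (NA : B × B → K)
    (hNA : ∀ p : B × B,
      NA p = NB p.1 + (μ * NB p.2 + bar (μ * NB p.2)) - TB (p.1 * p.2 * (u : B) * σ p.2))
    (g : Bˣ) (lam : kˣ) (hg : (g : B) * σ (g : B) = (lam : k) • (1 : B))
    (q : Bˣ) (hq : (q : B) * ((u : B) * σ (q : B) * ((u⁻¹ : Bˣ) : B)) = 1)
    (hNq : NB (q : B) = (bar (NB (g : B)))⁻¹ * NB (g : B)) :
    (∀ a b : B, σ a = a →
      NA ((g : B) * a * ((g⁻¹ : Bˣ) : B),
          ((lam : k)⁻¹) • (sharpB (σ (g : B)) * b * (q : B))) = NA (a, b)) ∧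
    ((g : B) * 1 * ((g⁻¹ : Bˣ) : B),
        ((lam : k)⁻¹) • (sharpB (σ (g : B)) * 0 * (q : B))) = ((1 : B), (0 : B)) := by
  constructor
  · intro a b _
    classical
    -- basic facts about σ
    have hσ1 : σ (1 : B) = 1 := by
      have h := hσ_mul 1 (σ 1)
      rw [one_mul, hσ_inv] at h
      rw [one_mul] at h
      exact h.symm
    set lamK : K := algebraMap k K (lam : k) with hlamKdef
    have hks : ∀ (c : k) (x : B), c • x = (algebraMap k K c) • x := fun c x =>
      (algebraMap_smul K c x).symm
    have hlam0 : lamK ≠ 0 := by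
      simp [hlamKdef]
    have hbarlam : bar lamK = lamK := bar.commutes (lam : k)
    have hg' : (g : B) * σ (g : B) = lamK • 1 := by rw [← hks]; exact hg
    have hσg : σ (g : B) = lamK • ((g⁻¹ : Bˣ) : B) := by
      calc σ (g : B) = ((g⁻¹ : Bˣ) : B) * ((g : B) * σ (g : B)) := by
            rw [← mul_assoc, Units.inv_mul, one_mul]
        _ = ((g⁻¹ : Bˣ) : B) * (lamK • 1) := by rw [hg']
        _ = lamK • ((g⁻¹ : Bˣ) : B) := by rw [mul_smul_comm, mul_one]
    set ν : K := NB (g : B) with hνdef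
    have hν : ν * bar ν = lamK ^ 3 := by
      have h := hNBmul (g : B) (σ (g : B))
      rw [hg', hNBσ, hNBsmul, hNB1, mul_one] at h
      exact h.symm
    have hν0 : ν ≠ 0 := by
      intro h0
      rw [h0, zero_mul] at hν
      exact hlam0 (pow_eq_zero_iff (by norm_num) |>.mp hν.symm)
    have hbarν0 : bar ν ≠ 0 := by
      intro h0
      rw [h0, mul_zero] at hν
      exact hlam0 (pow_eq_zero_iff (by norm_num) |>.mp hν.symm)
    have hNBginv : NB ((g⁻¹ : Bˣ) : B) = ν⁻¹ := by
      have h := hNBmul (g : B) ((g⁻¹ : Bˣ) : B)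
      rw [Units.mul_inv, hNB1] at h
      exact eq_inv_of_mul_eq_one_left (mul_comm ν _ ▸ h.symm)
    -- sharp of σ g
    have hsharpσg : sharpB (σ (g : B)) = (lamK⁻¹ * bar ν) • (g : B) := by
      have h1 : σ (g : B) * sharpB (σ (g : B)) = bar ν • 1 := by
        rw [hsharp₁, hNBσ]
      have h2 : (g : B) * (σ (g : B) * sharpB (σ (g : B))) = bar ν • (g : B) := by
        rw [h1, mul_smul_comm, mul_one]
      rw [← mul_assoc, hg', smul_mul_assoc, one_mul] at h2
      have h4 := congrArg (fun x : B => lamK⁻¹ • x) h2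
      simp only [smul_smul, inv_mul_cancel₀ hlam0, one_smul] at h4
      exact h4
    -- q u σ q = u
    have hqu : ∀ y : B, (q : B) * ((u : B) * (σ (q : B) * y)) = (u : B) * y := by
      intro y
      have h := congrArg (fun z : B => z * ((u : B) * y)) hq
      simp only [one_mul] at h
      calc (q : B) * ((u : B) * (σ (q : B) * y))
          = (q : B) * ((u : B) * σ (q : B) * ((u⁻¹ : Bˣ) : B)) * ((u : B) * y) := by
            simp [mul_assoc]
        _ = (u : B) * y := by rw [h]
    have hginv : ∀ y : B, ((g⁻¹ : Bˣ) : B) * ((g : B) * y) = y := by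
      intro y; rw [← mul_assoc, Units.inv_mul, one_mul]
    -- rewrite the second component
    set d : K := lamK⁻¹ * (lamK⁻¹ * bar ν) with hddef
    have hb' : ((lam : k)⁻¹) • (sharpB (σ (g : B)) * b * (q : B))
        = d • ((g : B) * b * (q : B)) := by
      rw [hsharpσg, hks, map_inv₀, smul_mul_assoc, smul_mul_assoc, smul_smul]
    have hbard : bar d = lamK⁻¹ * (lamK⁻¹ * ν) := by
      simp only [hddef, map_mul, map_inv₀, hbarlam, hbar]
    -- norm of first component
    have e1 : NB ((g : B) * a * ((g⁻¹ : Bˣ) : B)) = NB a := by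
      rw [hNBmul, hNBmul, hNBginv, ← hνdef]
      field_simp
    -- norm of second component
    have e2 : NB (d • ((g : B) * b * (q : B))) = NB b := by
      rw [hNBsmul, hNBmul, hNBmul, hNq, ← hνdef, hddef]
      field_simp
      linear_combination NB b * (ν * bar ν + lamK ^ 3) * hν
    -- trace term
    have hX : ((g : B) * a * ((g⁻¹ : Bˣ) : B)) * ((g : B) * b * (q : B)) * (u : B) *
        (σ ((q : B)) * (σ b * ((g⁻¹ : Bˣ) : B)))
        = (g : B) * (a * (b * ((u : B) * (σ b * ((g⁻¹ : Bˣ) : B))))) := by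
      simp only [mul_assoc, hginv, hqu]
    have e3 : TB (((g : B) * a * ((g⁻¹ : Bˣ) : B)) * (d • ((g : B) * b * (q : B))) * (u : B) *
        σ (d • ((g : B) * b * (q : B)))) = TB (a * b * (u : B) * σ b) := by
      have hσb' : σ (d • ((g : B) * b * (q : B)))
          = bar d • (σ (q : B) * (σ b * σ (g : B))) := by
        rw [hσ_smul, hσ_mul, hσ_mul]
      rw [hσb', hσg]
      have hexp : ((g : B) * a * ((g⁻¹ : Bˣ) : B)) *
          (d • ((g : B) * b * (q : B))) * (u : B) *
          (bar d • (σ (q : B) * (σ b * (lamK • ((g⁻¹ : Bˣ) : B)))))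
          = (d * (bar d * lamK)) •
            ((g : B) * (a * (b * ((u : B) * (σ b * ((g⁻¹ : Bˣ) : B)))))) := by
        rw [← hX]
        simp only [mul_smul_comm, smul_mul_assoc, smul_smul]
        ring_nf
      rw [hexp, map_smul, smul_eq_mul]
      have hcoef : d * (bar d * lamK) = 1 := by
        rw [hddef, hbard]
        field_simp
        linear_combination hν
      rw [hcoef, one_mul]
      rw [hTB_comm]
      congr 1
      simp [mul_assoc]
    rw [hNA, hNA, hb']
    simp only
    rw [e1, e2, e3]
  · simp [Units.mul_inv]
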